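/- Let S be a positive integer, a ∈ ℝ^S with a_s > 0 for all s, b ∈ ℝ^S with b_s ≥ 0 for all s, c ∈ ℝ^S, and ρ > 0. Define γ* : ℝ → ℝ by letting γ*(α) be the unique real number satisfying Σ_{s=1}^S a_s · max(−b_s α + γ*(α) + c_s, 0) = ρ. Then γ* is monotone nondecreasing and concave on ℝ. -/
import Mathlib


open scoped BigOperators

/-- The solution path `γ*` of the nonlinear equation `a^T [−bα + γe + c]_+ = ρ`
is monotone nondecreasing and concave in `α`. -/
theorem stmt8 (S : ℕ) (hS : 0 < S)
    (a : Fin S → ℝ) (ha : ∀ s, 0 < a s)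
    (b : Fin S → ℝ) (hb : ∀ s, 0 ≤ b s)
    (c : Fin S → ℝ) (ρ : ℝ) (hρ : 0 < ρ)
    (γstar : ℝ → ℝ)
    (hγ : ∀ α : ℝ, ∑ s, a s * max (-(b s) * α + γstar α + c s) 0 = ρ) :
    Monotone γstar ∧ ConcaveOn ℝ Set.univ γstar := by
  have key : ∀ α γ : ℝ, (∑ s, a s * max (-(b s) * α + γ + c s) 0) ≤ ρ → γ ≤ γstar α := by
    intro α γ h
    by_contra hlt
    push_neg at hlt
    have hpos : ∃ s₀ : Fin S, 0 < a s₀ * max (-(b s₀) * α + γstar α + c s₀) 0 := by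
      by_contra hc
      push_neg at hc
      have hle : (∑ s, a s * max (-(b s) * α + γstar α + c s) 0) ≤ 0 :=
        Finset.sum_nonpos fun s _ => hc s
      linarith [hγ α]
    obtain ⟨s₀, hs₀⟩ := hpos
    have hmax : 0 < max (-(b s₀) * α + γstar α + c s₀) 0 := by
      rcases mul_pos_iff.mp hs₀ with ⟨_, h2⟩ | ⟨h1, _⟩
      · exact h2
      · exact absurd (ha s₀) (not_lt.mpr h1.le)
    have harg : 0 < -(b s₀) * α + γstar α + c s₀ := by
      rcases lt_max_iff.mp hmax with h | h
      · exact h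
      · exact absurd h (lt_irrefl 0)
    have hsum : (∑ s, a s * max (-(b s) * α + γstar α + c s) 0)
        < ∑ s, a s * max (-(b s) * α + γ + c s) 0 := by
      apply Finset.sum_lt_sum
      · intro s _
        exact mul_le_mul_of_nonneg_left (max_le_max (by linarith) le_rfl) (ha s).le
      · refine ⟨s₀, Finset.mem_univ s₀, ?_⟩
        apply mul_lt_mul_of_pos_left _ (ha s₀)
        rw [max_eq_left harg.le, max_eq_left (by linarith : (0:ℝ) ≤ -(b s₀) * α + γ + c s₀)]
        linarith
    linarith [hγ α]
  constructor
  · intro x y hxy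
    apply key
    calc ∑ s, a s * max (-(b s) * y + γstar x + c s) 0
        ≤ ∑ s, a s * max (-(b s) * x + γstar x + c s) 0 := by
          apply Finset.sum_le_sum
          intro s _
          refine mul_le_mul_of_nonneg_left (max_le_max ?_ le_rfl) (ha s).le
          nlinarith [mul_le_mul_of_nonneg_left hxy (hb s)]
      _ = ρ := hγ x
  · refine ⟨convex_univ, ?_⟩
    intro x _ y _ p q hp hq hpq
    simp only [smul_eq_mul]
    apply key
    have hterm : ∀ u : Fin S,
        a u * max (-(b u) * (p * x + q * y) + (p * γstar x + q * γstar y) + c u) 0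
        ≤ p * (a u * max (-(b u) * x + γstar x + c u) 0)
          + q * (a u * max (-(b u) * y + γstar y + c u) 0) := by
      intro u
      have h1 : -(b u) * (p * x + q * y) + (p * γstar x + q * γstar y) + c u
          = p * (-(b u) * x + γstar x + c u) + q * (-(b u) * y + γstar y + c u) := by
        linear_combination (-(c u)) * hpq
      rw [h1]
      have hmx : max (p * (-(b u) * x + γstar x + c u) + q * (-(b u) * y + γstar y + c u)) 0
          ≤ p * max (-(b u) * x + γstar x + c u) 0 + q * max (-(b u) * y + γstar y + c u) 0 := by
        apply max_le
        · have := mul_le_mul_of_nonneg_left (le_max_left (-(b u) * x + γstar x + c u) 0) hp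
          have := mul_le_mul_of_nonneg_left (le_max_left (-(b u) * y + γstar y + c u) 0) hq
          linarith
        · have := mul_nonneg hp (le_max_right (-(b u) * x + γstar x + c u) 0)
          have := mul_nonneg hq (le_max_right (-(b u) * y + γstar y + c u) 0)
          linarith
      calc a u * max (p * (-(b u) * x + γstar x + c u) + q * (-(b u) * y + γstar y + c u)) 0
          ≤ a u * (p * max (-(b u) * x + γstar x + c u) 0
              + q * max (-(b u) * y + γstar y + c u) 0) :=
            mul_le_mul_of_nonneg_left hmx (ha u).le
        _ = p * (a u * max (-(b u) * x + γstar x + c u) 0)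
              + q * (a u * max (-(b u) * y + γstar y + c u) 0) := by ring
    calc (∑ u, a u * max (-(b u) * (p * x + q * y) + (p * γstar x + q * γstar y) + c u) 0)
        ≤ ∑ u, (p * (a u * max (-(b u) * x + γstar x + c u) 0)
            + q * (a u * max (-(b u) * y + γstar y + c u) 0)) :=
          Finset.sum_le_sum fun u _ => hterm u
      _ = p * (∑ u, a u * max (-(b u) * x + γstar x + c u) 0)
            + q * (∑ u, a u * max (-(b u) * y + γstar y + c u) 0) := by
          rw [Finset.sum_add_distrib, Finset.mul_sum, Finset.mul_sum]
      _ = ρ := by rw [hγ x, hγ y]; linear_combination ρ * hpq
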